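/- arXiv:1904.00287 — 4 statements merged into one kernel-verified Lean document; each statement's English description precedes it below -/
import Mathlib

section
/- Blackwell dominance implies one-step convex dominance of the Bayesian filter: if B(2) Blackwell dominates B(1), i.e. B_{iy}(1) = Σ_{ȳ ∈ 𝕐_2} B_{iȳ}(2) L_{ȳ y} for a stochastic matrix L (entries L_{ȳ y} ≥ 0 with Σ_{y ∈ 𝕐_1} L_{ȳ y} = 1), then for every probability vector π and every convex function φ : ℝ^X → ℝ, Σ_{y ∈ 𝕐_1} φ(T(π, y, 1)) σ(π, y, 1) ≤ Σ_{ȳ ∈ 𝕐_2} φ(T(π, ȳ, 2)) σ(π, ȳ, 2). -/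
open Finset

/-- Predicted belief `(P'π)_j = Σ_i P_{ij} π_i`. -/
def pdct {X : ℕ} (P : Fin X → Fin X → ℝ) (π : Fin X → ℝ) (j : Fin X) : ℝ :=
  ∑ i, P i j * π i

/-- One-step normalizer `σ(π, y, u) = Σ_j (P'π)_j B_{jy}(u)`. -/
def nrm1 {X Y : ℕ} (B : Fin X → Fin Y → ℝ) (pr : Fin X → ℝ) (y : Fin Y) : ℝ :=
  ∑ j, pr j * B j y

/-- One-step posterior (Bayes filter update) `T(π, y, u)`. -/
noncomputable def post {X Y : ℕ} (B : Fin X → Fin Y → ℝ) (pr : Fin X → ℝ)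
    (y : Fin Y) : Fin X → ℝ :=
  fun j => B j y * pr j / nrm1 B pr y

/-- **Blackwell dominance implies one-step convex dominance of the Bayesian
filter.**  If `B(1) = B(2) L` for a stochastic matrix `L`, then for every
belief `π` and every `φ` convex on the probability simplex,
`Σ_{y∈𝕐₁} φ(T(π,y,1)) σ(π,y,1) ≤ Σ_{ȳ∈𝕐₂} φ(T(π,ȳ,2)) σ(π,ȳ,2)`. -/
theorem stmt_5 (X Y₁ Y₂ : ℕ)
    (P : Fin X → Fin X → ℝ) (hPnn : ∀ i j, 0 ≤ P i j) (hProw : ∀ i, ∑ j, P i j = 1)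
    (B₁ : Fin X → Fin Y₁ → ℝ) (B₂ : Fin X → Fin Y₂ → ℝ)
    (hB₁nn : ∀ x y, 0 ≤ B₁ x y) (hB₂nn : ∀ x y, 0 ≤ B₂ x y)
    (hB₁row : ∀ x, ∑ y, B₁ x y = 1) (hB₂row : ∀ x, ∑ y, B₂ x y = 1)
    -- Blackwell dominance: B(1) = B(2) × L for a stochastic matrix L
    (L : Fin Y₂ → Fin Y₁ → ℝ)
    (hLnn : ∀ ybar y, 0 ≤ L ybar y) (hLrow : ∀ ybar, ∑ y, L ybar y = 1)
    (hBW : ∀ (i : Fin X) (y : Fin Y₁), B₁ i y = ∑ ybar, B₂ i ybar * L ybar y)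
    -- belief
    (π : Fin X → ℝ) (hπnn : ∀ i, 0 ≤ π i) (hπ : ∑ i, π i = 1)
    (hσ₁ : ∀ y : Fin Y₁, 0 < nrm1 B₁ (pdct P π) y)
    (hσ₂ : ∀ y : Fin Y₂, 0 < nrm1 B₂ (pdct P π) y)
    (φ : (Fin X → ℝ) → ℝ) (hφ : ConvexOn ℝ (stdSimplex ℝ (Fin X)) φ) :
    (∑ y : Fin Y₁, φ (post B₁ (pdct P π) y) * nrm1 B₁ (pdct P π) y) ≤
      ∑ ybar : Fin Y₂, φ (post B₂ (pdct P π) ybar) * nrm1 B₂ (pdct P π) ybar := by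
  set pr := pdct P π with hpr
  have hprnn : ∀ j, 0 ≤ pr j := fun j =>
    Finset.sum_nonneg fun i _ => mul_nonneg (hPnn i j) (hπnn i)
  -- decomposition of normalizers
  have hdec : ∀ y : Fin Y₁, nrm1 B₁ pr y = ∑ ybar, L ybar y * nrm1 B₂ pr ybar := by
    intro y
    unfold nrm1
    simp only [Finset.mul_sum]
    rw [Finset.sum_comm]
    congr 1; ext j
    rw [hBW j y, Finset.mul_sum]
    congr 1; ext ybar; ring
  -- posteriors are in the simplex
  have hmem : ∀ ybar : Fin Y₂, post B₂ pr ybar ∈ stdSimplex ℝ (Fin X) := by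
    intro ybar
    constructor
    · intro j
      exact div_nonneg (mul_nonneg (hB₂nn j ybar) (hprnn j)) (hσ₂ ybar).le
    · unfold post
      rw [← Finset.sum_div, div_eq_one_iff_eq (hσ₂ ybar).ne']
      unfold nrm1
      congr 1; ext j; ring
  -- pointwise Jensen for each y
  have key : ∀ y : Fin Y₁,
      φ (post B₁ pr y) * nrm1 B₁ pr y ≤
        ∑ ybar, L ybar y * nrm1 B₂ pr ybar * φ (post B₂ pr ybar) := by
    intro y
    set w : Fin Y₂ → ℝ := fun ybar => L ybar y * nrm1 B₂ pr ybar / nrm1 B₁ pr y with hw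
    have hwnn : ∀ ybar ∈ Finset.univ, 0 ≤ w ybar := fun ybar _ =>
      div_nonneg (mul_nonneg (hLnn ybar y) (hσ₂ ybar).le) (hσ₁ y).le
    have hwsum : ∑ ybar, w ybar = 1 := by
      rw [hw, ← Finset.sum_div, ← hdec y, div_self (hσ₁ y).ne']
    have hcenter : post B₁ pr y = ∑ ybar, w ybar • post B₂ pr ybar := by
      funext j
      simp only [Finset.sum_apply, Pi.smul_apply, smul_eq_mul, hw, post]
      rw [hBW j y, Finset.sum_mul, Finset.sum_div]
      congr 1; ext ybar
      field_simp
      rw [div_eq_div_iff (hσ₁ y).ne' (mul_ne_zero (hσ₁ y).ne' (hσ₂ ybar).ne')]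
      ring
    have := hφ.map_sum_le hwnn hwsum (fun ybar _ => hmem ybar)
    rw [← hcenter] at this
    calc φ (post B₁ pr y) * nrm1 B₁ pr y
        ≤ (∑ ybar, w ybar • φ (post B₂ pr ybar)) * nrm1 B₁ pr y :=
          mul_le_mul_of_nonneg_right this (hσ₁ y).le
      _ = ∑ ybar, L ybar y * nrm1 B₂ pr ybar * φ (post B₂ pr ybar) := by
          rw [Finset.sum_mul]
          congr 1; ext ybar
          simp only [smul_eq_mul, hw]
          field_simp
          rw [mul_right_comm _ (nrm1 B₁ pr y)]
          exact mul_div_cancel_right₀ _ (hσ₁ y).ne'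
  calc ∑ y : Fin Y₁, φ (post B₁ pr y) * nrm1 B₁ pr y
      ≤ ∑ y : Fin Y₁, ∑ ybar, L ybar y * nrm1 B₂ pr ybar * φ (post B₂ pr ybar) :=
        Finset.sum_le_sum fun y _ => key y
    _ = ∑ ybar : Fin Y₂, φ (post B₂ pr ybar) * nrm1 B₂ pr ybar := by
        rw [Finset.sum_comm]
        congr 1; ext ybar
        rw [← Finset.sum_mul]
        conv_lhs => rw [show (∑ y, L ybar y * nrm1 B₂ pr ybar) =
          (∑ y, L ybar y) * nrm1 B₂ pr ybar from (Finset.sum_mul ..).symm]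
        rw [hLrow]
        ring
end

section
/- For additive noise models, the single-crossing condition (A2) is equivalent to dispersive dominance of the noise distributions: let F_1 and F_2 be continuous, strictly increasing cdfs on ℝ. Then [for all ȳ, y ∈ ℝ, the map x ↦ F_1(ȳ − x) − F_2(y − x) is single crossing in x] holds if and only if F_1 ≥_D F_2 in the dispersive order, i.e. F_1^{-1}(β) − F_1^{-1}(α) ≥ F_2^{-1}(β) − F_2^{-1}(α) for all 0 < α < β < 1. -/
/-- `ψ` is single crossing (from below): once nonnegative it stays nonnegative. -/
def SingleCrossing {α : Type*} [Preorder α] (ψ : α → ℝ) : Prop :=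
  ∀ ⦃x x' : α⦄, x < x' → (0 ≤ ψ x → 0 ≤ ψ x') ∧ (ψ x' ≤ 0 → ψ x ≤ 0)

lemma cdf_bounds (F : ℝ → ℝ) (hm : StrictMono F)
    (hbot : Filter.Tendsto F Filter.atBot (nhds 0))
    (htop : Filter.Tendsto F Filter.atTop (nhds 1)) (x : ℝ) :
    0 < F x ∧ F x < 1 := by
  constructor
  · have h1 : F (x - 1) < F x := hm (by linarith)
    have h2 : (0 : ℝ) ≤ F (x - 1) :=
      le_of_tendsto hbot (Filter.eventually_atBot.2 ⟨x - 1, fun y hy => hm.monotone hy⟩)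
    linarith
  · have h1 : F x < F (x + 1) := hm (by linarith)
    have h2 : F (x + 1) ≤ 1 :=
      ge_of_tendsto htop (Filter.eventually_atTop.2 ⟨x + 1, fun y hy => hm.monotone hy⟩)
    linarith

/-- **(A2) for the additive model ⇔ dispersive dominance.**
Let `F₁, F₂` be continuous strictly increasing cdfs on `ℝ` (limits `0` at `-∞`
and `1` at `+∞`), with quantile functions `Q₁, Q₂` (i.e. `Fᵤ (Qᵤ α) = α` for
`α ∈ (0,1)`).  Then the map `x ↦ F₁(ȳ - x) - F₂(y - x)` is single crossing for
all `ȳ, y` if and only if `F₁ ≥_D F₂` in the dispersive order: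
`Q₁ β - Q₁ α ≥ Q₂ β - Q₂ α` for all `0 < α < β < 1`. -/
theorem stmt_7 (F₁ F₂ Q₁ Q₂ : ℝ → ℝ)
    (hF₁c : Continuous F₁) (hF₂c : Continuous F₂)
    (hF₁m : StrictMono F₁) (hF₂m : StrictMono F₂)
    (hF₁bot : Filter.Tendsto F₁ Filter.atBot (nhds 0))
    (hF₁top : Filter.Tendsto F₁ Filter.atTop (nhds 1))
    (hF₂bot : Filter.Tendsto F₂ Filter.atBot (nhds 0))
    (hF₂top : Filter.Tendsto F₂ Filter.atTop (nhds 1))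
    (hQ₁ : ∀ α : ℝ, 0 < α → α < 1 → F₁ (Q₁ α) = α)
    (hQ₂ : ∀ α : ℝ, 0 < α → α < 1 → F₂ (Q₂ α) = α) :
    (∀ ybar y : ℝ, SingleCrossing (fun x : ℝ => F₁ (ybar - x) - F₂ (y - x))) ↔
    (∀ α β : ℝ, 0 < α → α < β → β < 1 → Q₂ β - Q₂ α ≤ Q₁ β - Q₁ α) := by
  constructor
  · intro h α β hα hαβ hβ
    have hα1 : α < 1 := hαβ.trans hβ
    have hβ0 : 0 < β := hα.trans hαβ
    have hQα : F₂ (Q₂ α) = α := hQ₂ α hα hα1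
    have hQβ : F₂ (Q₂ β) = β := hQ₂ β hβ0 hβ
    have hQ12 : Q₂ α < Q₂ β := by
      have : F₂ (Q₂ α) < F₂ (Q₂ β) := by rw [hQα, hQβ]; exact hαβ
      exact hF₂m.lt_iff_lt.mp this
    set s : ℝ := Q₂ β - Q₂ α with hs
    have hs0 : 0 < s := by simp only [hs]; linarith
    have key := (h (Q₁ α) (Q₂ α) (show -s < (0 : ℝ) by linarith)).2
    simp only [sub_zero, sub_neg_eq_add] at key
    have h0 : F₁ (Q₁ α) - F₂ (Q₂ α) ≤ 0 := by
      rw [hQ₁ α hα hα1, hQα]; linarith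
    have h1 : F₁ (Q₁ α + s) - F₂ (Q₂ α + s) ≤ 0 := key h0
    have h2 : Q₂ α + s = Q₂ β := by rw [hs]; ring
    rw [h2, hQβ] at h1
    have h3 : F₁ (Q₁ α + s) ≤ F₁ (Q₁ β) := by rw [hQ₁ β hβ0 hβ]; linarith
    have h4 : Q₁ α + s ≤ Q₁ β := hF₁m.le_iff_le.mp h3
    linarith
  · intro h ybar y x x' hxx'
    have ht0 : 0 < x' - x := by linarith
    constructor
    · intro hpos
      simp only at hpos ⊢
      set α : ℝ := F₂ (y - x') with hαdef
      set β : ℝ := F₂ (y - x) with hβdef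
      have hα0 : 0 < α := (cdf_bounds F₂ hF₂m hF₂bot hF₂top _).1
      have hβ1 : β < 1 := (cdf_bounds F₂ hF₂m hF₂bot hF₂top _).2
      have hαβ : α < β := hF₂m (by linarith)
      have hα1 : α < 1 := hαβ.trans hβ1
      have hβ0 : 0 < β := hα0.trans hαβ
      have hq2α : Q₂ α = y - x' := hF₂m.injective (by rw [hQ₂ α hα0 hα1])
      have hq2β : Q₂ β = y - x := hF₂m.injective (by rw [hQ₂ β hβ0 hβ1])
      have hdisp := h α β hα0 hαβ hβ1
      rw [hq2α, hq2β] at hdisp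
      have h1 : F₁ (Q₁ β) ≤ F₁ (ybar - x) := by rw [hQ₁ β hβ0 hβ1]; linarith
      have h2 : Q₁ β ≤ ybar - x := hF₁m.le_iff_le.mp h1
      have h3 : Q₁ α ≤ ybar - x' := by linarith
      have h4 : F₁ (Q₁ α) ≤ F₁ (ybar - x') := hF₁m.monotone h3
      rw [hQ₁ α hα0 hα1] at h4
      linarith
    · intro hneg
      simp only at hneg ⊢
      set α : ℝ := F₂ (y - x') with hαdef
      set β : ℝ := F₂ (y - x) with hβdef
      have hα0 : 0 < α := (cdf_bounds F₂ hF₂m hF₂bot hF₂top _).1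
      have hβ1 : β < 1 := (cdf_bounds F₂ hF₂m hF₂bot hF₂top _).2
      have hαβ : α < β := hF₂m (by linarith)
      have hα1 : α < 1 := hαβ.trans hβ1
      have hβ0 : 0 < β := hα0.trans hαβ
      have hq2α : Q₂ α = y - x' := hF₂m.injective (by rw [hQ₂ α hα0 hα1])
      have hq2β : Q₂ β = y - x := hF₂m.injective (by rw [hQ₂ β hβ0 hβ1])
      have hdisp := h α β hα0 hαβ hβ1
      rw [hq2α, hq2β] at hdisp
      have h1 : F₁ (ybar - x') ≤ F₁ (Q₁ α) := by rw [hQ₁ α hα0 hα1]; linarith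
      have h2 : ybar - x' ≤ Q₁ α := hF₁m.le_iff_le.mp h1
      have h3 : ybar - x ≤ Q₁ β := by linarith
      have h4 : F₁ (ybar - x) ≤ F₁ (Q₁ β) := hF₁m.monotone h3
      rw [hQ₁ β hβ0 hβ1] at h4
      linarith
end

section
/- Condition (A5) implies monotone likelihood ratio ordering of posteriors across observation sequences: if for given u and lexicographic z < z̄ the matrix H_u(i,j,z,z̄) = L_u(z̄)(e_j e_i' − e_i e_j')L_u(z)' + L_u(z)(e_i e_j' − e_j e_i')L_u(z̄)' has all entries nonnegative for every i < j, then for every probability vector π and all i ≤ j: (e_i'L_u(z)'π)(e_j'L_u(z̄)'π) ≥ (e_j'L_u(z)'π)(e_i'L_u(z̄)'π); i.e., the posterior T(π, z, u) is dominated by T(π, z̄, u) in the monotone likelihood ratio order, and hence g'T(π, z, u) ≤ g'T(π, z̄, u) for any nondecreasing level vector g. -/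
open Finset Matrix

/-- Matrix of the unnormalized filter for the observation sequence `z`:
`L_u(z) = Π_{t=1}^k P B_{y_t}(u)`, product taken in order `t = 1,…,k`. -/
noncomputable def Lmat {X Y : ℕ} (P : Matrix (Fin X) (Fin X) ℝ)
    (B : Fin X → Fin Y → ℝ) {k : ℕ} (z : Fin k → Fin Y) :
    Matrix (Fin X) (Fin X) ℝ :=
  (List.ofFn (fun t => P * Matrix.diagonal (fun i => B i (z t)))).prod

/-- Normalizer `σ(π, z) = 1' L(z)' π`. -/
noncomputable def sigL {X Y : ℕ} (P : Matrix (Fin X) (Fin X) ℝ)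
    (B : Fin X → Fin Y → ℝ) {k : ℕ} (z : Fin k → Fin Y) (π : Fin X → ℝ) : ℝ :=
  ∑ i, ((Lmat P B z)ᵀ *ᵥ π) i

/-- Posterior mean `g'T(π, z) = g' L(z)' π / (1' L(z)' π)`. -/
noncomputable def gT {X Y : ℕ} (P : Matrix (Fin X) (Fin X) ℝ)
    (B : Fin X → Fin Y → ℝ) (g : Fin X → ℝ) {k : ℕ} (z : Fin k → Fin Y)
    (π : Fin X → ℝ) : ℝ :=
  (∑ i, g i * ((Lmat P B z)ᵀ *ᵥ π) i) / sigL P B z π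

/-- `H`-matrix from two unnormalized filter matrices:
`Hgen L M i j = M (e_j e_i' - e_i e_j') Lᵀ + L (e_i e_j' - e_j e_i') Mᵀ`. -/
noncomputable def Hgen {X : ℕ} (L M : Matrix (Fin X) (Fin X) ℝ) (i j : Fin X) :
    Matrix (Fin X) (Fin X) ℝ :=
  M * (Matrix.single j i 1 - Matrix.single i j 1) * Lᵀ +
    L * (Matrix.single i j 1 - Matrix.single j i 1) * Mᵀ


lemma listProd_nonneg {X : ℕ} (l : List (Matrix (Fin X) (Fin X) ℝ))
    (h : ∀ M ∈ l, ∀ a b, 0 ≤ M a b) : ∀ a b, 0 ≤ l.prod a b := by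
  induction l with
  | nil =>
    intro a b
    rw [List.prod_nil, Matrix.one_apply]
    split <;> norm_num
  | cons M l ih =>
    intro a b
    rw [List.prod_cons, Matrix.mul_apply]
    exact Finset.sum_nonneg fun c _ =>
      mul_nonneg (h M (by simp) a c) (ih (fun N hN => h N (List.mem_cons_of_mem _ hN)) c b)

lemma Lmat_nonneg {X Y : ℕ} (P : Matrix (Fin X) (Fin X) ℝ)
    (hPnn : ∀ i j, 0 ≤ P i j) (B : Fin X → Fin Y → ℝ)
    (hBnn : ∀ x y, 0 ≤ B x y) {k : ℕ} (z : Fin k → Fin Y) :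
    ∀ a b, 0 ≤ Lmat P B z a b := by
  apply listProd_nonneg
  intro M hM a b
  rw [List.mem_ofFn] at hM
  obtain ⟨t, rfl⟩ := hM
  rw [Matrix.mul_apply]
  refine Finset.sum_nonneg fun c _ => mul_nonneg (hPnn a c) ?_
  rw [Matrix.diagonal_apply]
  split
  · exact hBnn c _
  · exact le_refl 0

lemma triple_apply {X : ℕ} (M L : Matrix (Fin X) (Fin X) ℝ) (p q a b : Fin X) :
    (M * (Matrix.single p q 1 : Matrix (Fin X) (Fin X) ℝ) * Lᵀ) a b
      = M a p * L b q := by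
  simp [Matrix.mul_apply, Matrix.single, ite_and, Finset.mul_sum,
    Finset.sum_mul, mul_comm]

lemma Hgen_apply {X : ℕ} (L M : Matrix (Fin X) (Fin X) ℝ) (i j a b : Fin X) :
    Hgen L M i j a b =
      M a j * L b i - M a i * L b j + (L a i * M b j - L a j * M b i) := by
  have h1 : Hgen L M i j =
      (M * (Matrix.single j i 1 : Matrix (Fin X) (Fin X) ℝ) * Lᵀ
        - M * (Matrix.single i j 1 : Matrix (Fin X) (Fin X) ℝ) * Lᵀ)
      + (L * (Matrix.single i j 1 : Matrix (Fin X) (Fin X) ℝ) * Mᵀ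
        - L * (Matrix.single j i 1 : Matrix (Fin X) (Fin X) ℝ) * Mᵀ) := by
    unfold Hgen
    rw [Matrix.mul_sub, Matrix.sub_mul, Matrix.mul_sub, Matrix.sub_mul]
  rw [h1]
  simp only [Matrix.add_apply, Matrix.sub_apply, triple_apply]

lemma sum_sum_mul {X : ℕ} (u v : Fin X → ℝ) :
    ∑ a, ∑ b, u a * v b = (∑ a, u a) * (∑ b, v b) := by
  rw [Finset.sum_mul_sum]

/-- **(A5) implies MLR ordering of posteriors across observation sequences.**
If `H_u(i,j,z,z̄)` is entrywise nonnegative for all `i < j`, then for every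
probability vector `π` and all `i ≤ j`,
`(e_i'L(z)'π)(e_j'L(z̄)'π) ≥ (e_j'L(z)'π)(e_i'L(z̄)'π)`, i.e. the posterior
`T(π,z,u)` is MLR-dominated by `T(π,z̄,u)`; hence `g'T(π,z,u) ≤ g'T(π,z̄,u)`
for any nondecreasing level vector `g` (when the normalizers are positive). -/
theorem stmt_16 (X Y : ℕ) (P : Matrix (Fin X) (Fin X) ℝ)
    (hPnn : ∀ i j, 0 ≤ P i j) (hProw : ∀ i, ∑ j, P i j = 1)
    (B : Fin X → Fin Y → ℝ)
    (hBnn : ∀ x y, 0 ≤ B x y) (hBrow : ∀ x, ∑ y, B x y = 1)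
    (k : ℕ) (z zbar : Fin k → Fin Y)
    (hH : ∀ i j : Fin X, i < j →
      ∀ a b, 0 ≤ Hgen (Lmat P B z) (Lmat P B zbar) i j a b)
    (π : Fin X → ℝ) (hπnn : ∀ i, 0 ≤ π i) (hπ : ∑ i, π i = 1) :
    (∀ i j : Fin X, i ≤ j →
      ((Lmat P B z)ᵀ *ᵥ π) j * ((Lmat P B zbar)ᵀ *ᵥ π) i ≤
        ((Lmat P B z)ᵀ *ᵥ π) i * ((Lmat P B zbar)ᵀ *ᵥ π) j) ∧
    (0 < sigL P B z π → 0 < sigL P B zbar π →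
      ∀ g : Fin X → ℝ, Monotone g → gT P B g z π ≤ gT P B g zbar π) := by
  set L := Lmat P B z with hLdef
  set M := Lmat P B zbar with hMdef
  have hLnn : ∀ a b, 0 ≤ L a b := Lmat_nonneg P hPnn B hBnn z
  have hMnn : ∀ a b, 0 ≤ M a b := Lmat_nonneg P hPnn B hBnn zbar
  set A : Fin X → ℝ := fun i => (Lᵀ *ᵥ π) i with hAdef
  set C : Fin X → ℝ := fun i => (Mᵀ *ᵥ π) i with hCdef
  have hAeq : ∀ i, A i = ∑ b, L b i * π b := by
    intro i
    simp [hAdef, Matrix.mulVec, dotProduct, Matrix.transpose_apply]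
  have hCeq : ∀ i, C i = ∑ b, M b i * π b := by
    intro i
    simp [hCdef, Matrix.mulVec, dotProduct, Matrix.transpose_apply]
  have hAnn : ∀ i, 0 ≤ A i := fun i => by
    rw [hAeq]
    exact Finset.sum_nonneg fun b _ => mul_nonneg (hLnn b i) (hπnn b)
  have hCnn : ∀ i, 0 ≤ C i := fun i => by
    rw [hCeq]
    exact Finset.sum_nonneg fun b _ => mul_nonneg (hMnn b i) (hπnn b)
  have key : ∀ i j : Fin X, i ≤ j → A j * C i ≤ A i * C j := by
    intro i j hij
    rcases eq_or_lt_of_le hij with h | h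
    · rw [h, mul_comm]
    · have hS : 0 ≤ ∑ a, ∑ b, π a * Hgen L M i j a b * π b :=
        Finset.sum_nonneg fun a _ => Finset.sum_nonneg fun b _ =>
          mul_nonneg (mul_nonneg (hπnn a) (hH i j h a b)) (hπnn b)
      have hexp : ∑ a, ∑ b, π a * Hgen L M i j a b * π b
          = 2 * (A i * C j - A j * C i) := by
        have hterm : ∀ a b : Fin X, π a * Hgen L M i j a b * π b =
            (π a * M a j) * (L b i * π b) - (π a * M a i) * (L b j * π b)
            + ((π a * L a i) * (M b j * π b) - (π a * L a j) * (M b i * π b)) := by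
          intro a b
          rw [Hgen_apply]
          ring
        calc ∑ a, ∑ b, π a * Hgen L M i j a b * π b
            = ∑ a, ∑ b, ((π a * M a j) * (L b i * π b)
                - (π a * M a i) * (L b j * π b)
                + ((π a * L a i) * (M b j * π b)
                  - (π a * L a j) * (M b i * π b))) := by
              exact Finset.sum_congr rfl fun a _ =>
                Finset.sum_congr rfl fun b _ => hterm a b
          _ = (∑ a, π a * M a j) * (∑ b, L b i * π b)
                - (∑ a, π a * M a i) * (∑ b, L b j * π b)
                + ((∑ a, π a * L a i) * (∑ b, M b j * π b)
                  - (∑ a, π a * L a j) * (∑ b, M b i * π b)) := by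
              simp only [Finset.sum_add_distrib, Finset.sum_sub_distrib, sum_sum_mul]
          _ = 2 * (A i * C j - A j * C i) := by
              have h1 : ∀ i, ∑ a, π a * M a i = C i := by
                intro i; rw [hCeq]
                exact Finset.sum_congr rfl fun a _ => mul_comm _ _
              have h2 : ∀ i, ∑ a, π a * L a i = A i := by
                intro i; rw [hAeq]
                exact Finset.sum_congr rfl fun a _ => mul_comm _ _
              rw [h1, h1, h2, h2, ← hAeq, ← hAeq, ← hCeq, ← hCeq]
              ring
      linarith
  refine ⟨key, ?_⟩
  intro hsz hszb g hg
  have hpair : ∀ i j : Fin X, 0 ≤ (g i - g j) * (C i * A j - A i * C j) := by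
    intro i j
    rcases le_total i j with h | h
    · have h1 : g i ≤ g j := hg h
      have h2 : A j * C i ≤ A i * C j := key i j h
      nlinarith
    · have h1 : g j ≤ g i := hg h
      have h2 : A i * C j ≤ A j * C i := key j i h
      nlinarith
  have hT : 0 ≤ ∑ i, ∑ j, (g i - g j) * (C i * A j - A i * C j) :=
    Finset.sum_nonneg fun i _ => Finset.sum_nonneg fun j _ => hpair i j
  have hTeq : ∑ i, ∑ j, (g i - g j) * (C i * A j - A i * C j)
      = 2 * ((∑ i, g i * C i) * (∑ j, A j) - (∑ i, g i * A i) * (∑ j, C j)) := by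
    calc ∑ i, ∑ j, (g i - g j) * (C i * A j - A i * C j)
        = ∑ i, ∑ j, ((g i * C i) * A j - (g i * A i) * C j
            + (A i * (g j * C j) - C i * (g j * A j))) := by
          exact Finset.sum_congr rfl fun i _ =>
            Finset.sum_congr rfl fun j _ => by ring
      _ = (∑ i, g i * C i) * (∑ j, A j) - (∑ i, g i * A i) * (∑ j, C j)
            + ((∑ i, A i) * (∑ j, g j * C j) - (∑ i, C i) * (∑ j, g j * A j)) := by
          simp only [Finset.sum_add_distrib, Finset.sum_sub_distrib, sum_sum_mul]
      _ = 2 * ((∑ i, g i * C i) * (∑ j, A j) - (∑ i, g i * A i) * (∑ j, C j)) := by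
          ring
  have hsAz : sigL P B z π = ∑ i, A i := rfl
  have hsAzb : sigL P B zbar π = ∑ i, C i := rfl
  have hineq : (∑ i, g i * A i) * (∑ i, C i) ≤ (∑ i, g i * C i) * (∑ i, A i) := by
    rw [hTeq] at hT
    linarith
  unfold gT
  rw [div_le_div_iff₀ hsz hszb]
  rw [hsAz, hsAzb] at *
  exact hineq
end

section
/- Blackwell dominance gives the myopic lower bound for controlled sensing POMDPs: consider a controlled sensing POMDP (any number of states X) and suppose B(u+1) Blackwell dominates B(u) for every u = 1,…,U−1, i.e. B_{iy}(u) = Σ_{ȳ ∈ 𝕐_{u+1}} B_{iȳ}(u+1) L^{(u)}_{ȳ y} for stochastic matrices L^{(u)}. Then for every value-iteration step k ≥ 1, every belief π and every u < U: Q_k(π, u+1) − Q_k(π, u) ≥ (r_{u+1} − r_u)'π; hence the largest maximizer of Q_k(π, ·) is at least the largest maximizer of u ↦ r_u'π, i.e. the myopic policy μ̲(π) = argmax_u r_u'π lower bounds the optimal value-iteration policy. -/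
open Finset

/-- Filter normalizer `σ(π, y, u) = Σ_j (Σ_i P_{ij} π_i) B_{jy}(u)`. -/
def sigF {X Y : ℕ} (P : Fin X → Fin X → ℝ) (B : Fin X → Fin Y → ℝ)
    (π : Fin X → ℝ) (y : Fin Y) : ℝ :=
  ∑ j, (∑ i, P i j * π i) * B j y

/-- HMM filter update `T(π, y, u)`. -/
noncomputable def TF {X Y : ℕ} (P : Fin X → Fin X → ℝ) (B : Fin X → Fin Y → ℝ)
    (π : Fin X → ℝ) (y : Fin Y) : Fin X → ℝ :=
  fun j => B j y * (∑ i, P i j * π i) / sigF P B π y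

/-- Value iteration for the controlled sensing POMDP:
`V_0 = 0`, `V_{k+1}(π) = max_u [ r_u'π + ρ Σ_y V_k(T(π,y,u)) σ(π,y,u) ]`. -/
noncomputable def Vit {X U : ℕ} [NeZero U] (P : Fin X → Fin X → ℝ) (Y : Fin U → ℕ)
    (B : (u : Fin U) → Fin X → Fin (Y u) → ℝ) (r : Fin U → Fin X → ℝ) (ρ : ℝ) :
    ℕ → (Fin X → ℝ) → ℝ
  | 0, _ => 0
  | (k+1), π =>
      Finset.univ.sup' Finset.univ_nonempty
        (fun u : Fin U => (∑ i, r u i * π i) +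
          ρ * ∑ y, Vit P Y B r ρ k (TF P (B u) π y) * sigF P (B u) π y)

/-- `Q_k(π, u) = r_u'π + ρ Σ_y V_{k-1}(T(π,y,u)) σ(π,y,u)` (for `k ≥ 1`). -/
noncomputable def Qit {X U : ℕ} [NeZero U] (P : Fin X → Fin X → ℝ) (Y : Fin U → ℕ)
    (B : (u : Fin U) → Fin X → Fin (Y u) → ℝ) (r : Fin U → Fin X → ℝ) (ρ : ℝ)
    (k : ℕ) (u : Fin U) (π : Fin X → ℝ) : ℝ :=
  (∑ i, r u i * π i) +
    ρ * ∑ y, Vit P Y B r ρ (k - 1) (TF P (B u) π y) * sigF P (B u) π y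

/-- Unnormalized (positively homogeneous) value iteration. -/
noncomputable def Wit {X U : ℕ} [NeZero U] (P : Fin X → Fin X → ℝ) (Y : Fin U → ℕ)
    (B : (u : Fin U) → Fin X → Fin (Y u) → ℝ) (r : Fin U → Fin X → ℝ) (ρ : ℝ) :
    ℕ → (Fin X → ℝ) → ℝ
  | 0, _ => 0
  | (k+1), q =>
      Finset.univ.sup' Finset.univ_nonempty
        (fun u : Fin U => (∑ i, r u i * q i) +
          ρ * ∑ y, Wit P Y B r ρ k (fun j => B u j y * ∑ i, P i j * q i))

section AuxLemmas

variable {X U : ℕ} [NeZero U] (P : Fin X → Fin X → ℝ) (Y : Fin U → ℕ)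
    (B : (u : Fin U) → Fin X → Fin (Y u) → ℝ) (r : Fin U → Fin X → ℝ) (ρ : ℝ)

lemma Wit_smul (c : ℝ) (hc : 0 ≤ c) (k : ℕ) (q : Fin X → ℝ) :
    Wit P Y B r ρ k (fun i => c * q i) = c * Wit P Y B r ρ k q := by
  induction k generalizing q with
  | zero => simp [Wit]
  | succ k ih =>
    rw [Wit, Wit,
      Finset.comp_sup'_eq_sup'_comp _ (fun x => c * x)
        (fun a b => mul_max_of_nonneg a b hc)]
    apply Finset.sup'_congr _ rfl
    intro u _
    have h1 : ∀ y : Fin (Y u),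
        Wit P Y B r ρ k (fun j => B u j y * ∑ i, P i j * (c * q i))
          = c * Wit P Y B r ρ k (fun j => B u j y * ∑ i, P i j * q i) := by
      intro y
      rw [← ih]
      congr 1
      funext j
      have : ∑ i, P i j * (c * q i) = c * ∑ i, P i j * q i := by
        rw [Finset.mul_sum]
        exact Finset.sum_congr rfl fun i _ => by ring
      rw [this]; ring
    rw [Finset.sum_congr rfl fun y _ => h1 y, ← Finset.mul_sum]
    have h2 : ∑ i, r u i * (c * q i) = c * ∑ i, r u i * q i := by
      rw [Finset.mul_sum]
      exact Finset.sum_congr rfl fun i _ => by ring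
    rw [h2]
    simp only [Function.comp]
    ring

lemma Wit_zero_fun (k : ℕ) : Wit P Y B r ρ k (fun _ => (0:ℝ)) = 0 := by
  have := Wit_smul P Y B r ρ 0 le_rfl k (fun _ => (0:ℝ))
  simpa using this

lemma Wit_add (hρ : 0 ≤ ρ) (k : ℕ) (q1 q2 : Fin X → ℝ) :
    Wit P Y B r ρ k (fun i => q1 i + q2 i)
      ≤ Wit P Y B r ρ k q1 + Wit P Y B r ρ k q2 := by
  induction k generalizing q1 q2 with
  | zero => simp [Wit]
  | succ k ih =>
    rw [Wit]
    apply Finset.sup'_le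
    intro u _
    have h1 : (∑ i, r u i * (q1 i + q2 i))
        = (∑ i, r u i * q1 i) + (∑ i, r u i * q2 i) := by
      rw [← Finset.sum_add_distrib]
      exact Finset.sum_congr rfl fun i _ => by ring
    have h2 : ∀ y : Fin (Y u),
        Wit P Y B r ρ k (fun j => B u j y * ∑ i, P i j * (q1 i + q2 i))
          ≤ Wit P Y B r ρ k (fun j => B u j y * ∑ i, P i j * q1 i)
            + Wit P Y B r ρ k (fun j => B u j y * ∑ i, P i j * q2 i) := by
      intro y
      have hq : (fun j => B u j y * ∑ i, P i j * (q1 i + q2 i))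
          = fun j => (B u j y * ∑ i, P i j * q1 i)
            + (B u j y * ∑ i, P i j * q2 i) := by
        funext j
        have : ∑ i, P i j * (q1 i + q2 i)
            = (∑ i, P i j * q1 i) + (∑ i, P i j * q2 i) := by
          rw [← Finset.sum_add_distrib]
          exact Finset.sum_congr rfl fun i _ => by ring
        rw [this]; ring
      rw [hq]
      exact ih _ _
    calc (∑ i, r u i * (q1 i + q2 i)) +
          ρ * ∑ y, Wit P Y B r ρ k (fun j => B u j y * ∑ i, P i j * (q1 i + q2 i))
        ≤ ((∑ i, r u i * q1 i) +
            ρ * ∑ y, Wit P Y B r ρ k (fun j => B u j y * ∑ i, P i j * q1 i))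
          + ((∑ i, r u i * q2 i) +
            ρ * ∑ y, Wit P Y B r ρ k (fun j => B u j y * ∑ i, P i j * q2 i)) := by
          rw [h1]
          have := Finset.sum_le_sum (fun y (_ : y ∈ (univ : Finset (Fin (Y u)))) => h2 y)
          rw [Finset.sum_add_distrib] at this
          nlinarith [mul_le_mul_of_nonneg_left this hρ]
      _ ≤ _ := by
          rw [Wit, Wit]
          exact add_le_add
            (Finset.le_sup' (fun u : Fin U => (∑ i, r u i * q1 i) +
              ρ * ∑ y, Wit P Y B r ρ k fun j => B u j y * ∑ i, P i j * q1 i)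
              (Finset.mem_univ u))
            (Finset.le_sup' (fun u : Fin U => (∑ i, r u i * q2 i) +
              ρ * ∑ y, Wit P Y B r ρ k fun j => B u j y * ∑ i, P i j * q2 i)
              (Finset.mem_univ u))

lemma Wit_comb (hρ : 0 ≤ ρ) (k : ℕ) {n : ℕ} (s : Finset (Fin n)) (a : Fin n → ℝ)
    (ha : ∀ y, 0 ≤ a y) (q : Fin n → Fin X → ℝ) :
    Wit P Y B r ρ k (fun j => ∑ y ∈ s, a y * q y j)
      ≤ ∑ y ∈ s, a y * Wit P Y B r ρ k (q y) := by
  classical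
  induction s using Finset.induction with
  | empty => simpa using (Wit_zero_fun P Y B r ρ k).le
  | insert _ _ hx ih =>
    rename_i x s
    rw [Finset.sum_insert hx]
    have h1 : (fun j => ∑ y ∈ insert x s, a y * q y j)
        = fun j => a x * q x j + ∑ y ∈ s, a y * q y j := by
      funext j; rw [Finset.sum_insert hx]
    rw [h1]
    calc Wit P Y B r ρ k (fun j => a x * q x j + ∑ y ∈ s, a y * q y j)
        ≤ Wit P Y B r ρ k (fun j => a x * q x j)
          + Wit P Y B r ρ k (fun j => ∑ y ∈ s, a y * q y j) :=
          Wit_add P Y B r ρ hρ k _ _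
      _ ≤ a x * Wit P Y B r ρ k (q x) + ∑ y ∈ s, a y * Wit P Y B r ρ k (q y) := by
          rw [Wit_smul P Y B r ρ (a x) (ha x) k (q x)]
          exact add_le_add_right ih _

lemma TF_mem (hPnn : ∀ i j, 0 ≤ P i j)
    (hBnn : ∀ u x y, 0 ≤ B u x y)
    (u : Fin U) (π : Fin X → ℝ) (hπ : π ∈ stdSimplex ℝ (Fin X))
    (y : Fin (Y u)) (hσpos : 0 < sigF P (B u) π y) :
    TF P (B u) π y ∈ stdSimplex ℝ (Fin X) := by
  constructor
  · intro j
    apply div_nonneg _ hσpos.le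
    exact mul_nonneg (hBnn u j y)
      (Finset.sum_nonneg fun i _ => mul_nonneg (hPnn i j) (hπ.1 i))
  · have : ∑ j, TF P (B u) π y j = (∑ j, B u j y * ∑ i, P i j * π i) / sigF P (B u) π y := by
      rw [Finset.sum_div]
      rfl
    rw [this]
    have hs : (∑ j, B u j y * ∑ i, P i j * π i) = sigF P (B u) π y := by
      unfold sigF
      exact Finset.sum_congr rfl fun j _ => by ring
    rw [hs, div_self hσpos.ne']

lemma Vit_term_eq (hPnn : ∀ i j, 0 ≤ P i j) (hBnn : ∀ u x y, 0 ≤ B u x y)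
    (hσ : ∀ (u : Fin U) (π : Fin X → ℝ), π ∈ stdSimplex ℝ (Fin X) →
      ∀ y : Fin (Y u), 0 < sigF P (B u) π y) :
    ∀ (k : ℕ) (π : Fin X → ℝ), π ∈ stdSimplex ℝ (Fin X) →
      (Vit P Y B r ρ k π = Wit P Y B r ρ k π) := by
  intro k
  induction k with
  | zero => intro π _; simp [Vit, Wit]
  | succ k ih =>
    intro π hπ
    rw [Vit, Wit]
    apply Finset.sup'_congr _ rfl
    intro u _
    congr 1
    congr 1
    apply Finset.sum_congr rfl
    intro y _
    have hσpos := hσ u π hπ y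
    have hT := TF_mem P Y B (hPnn) (hBnn) u π hπ y hσpos
    rw [ih _ hT]
    rw [mul_comm, ← Wit_smul P Y B r ρ (sigF P (B u) π y) hσpos.le k (TF P (B u) π y)]
    congr 1
    funext j
    show sigF P (B u) π y * (B u j y * (∑ i, P i j * π i) / sigF P (B u) π y) = _
    rw [mul_comm, div_mul_cancel₀ _ hσpos.ne']

lemma Vit_sig_eq_Wit (hPnn : ∀ i j, 0 ≤ P i j) (hBnn : ∀ u x y, 0 ≤ B u x y)
    (hσ : ∀ (u : Fin U) (π : Fin X → ℝ), π ∈ stdSimplex ℝ (Fin X) →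
      ∀ y : Fin (Y u), 0 < sigF P (B u) π y)
    (k : ℕ) (π : Fin X → ℝ) (hπ : π ∈ stdSimplex ℝ (Fin X)) (u : Fin U) (y : Fin (Y u)) :
    Vit P Y B r ρ k (TF P (B u) π y) * sigF P (B u) π y
      = Wit P Y B r ρ k (fun j => B u j y * ∑ i, P i j * π i) := by
  have hσpos := hσ u π hπ y
  have hT := TF_mem P Y B hPnn hBnn u π hπ y hσpos
  rw [Vit_term_eq P Y B r ρ hPnn hBnn hσ k _ hT]
  rw [mul_comm, ← Wit_smul P Y B r ρ (sigF P (B u) π y) hσpos.le k (TF P (B u) π y)]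
  congr 1
  funext j
  show sigF P (B u) π y * (B u j y * (∑ i, P i j * π i) / sigF P (B u) π y) = _
  rw [mul_comm, div_mul_cancel₀ _ hσpos.ne']

lemma key_ineq (hPnn : ∀ i j, 0 ≤ P i j) (hBnn : ∀ u x y, 0 ≤ B u x y)
    (hρ : 0 ≤ ρ)
    (hσ : ∀ (u : Fin U) (π : Fin X → ℝ), π ∈ stdSimplex ℝ (Fin X) →
      ∀ y : Fin (Y u), 0 < sigF P (B u) π y)
    (L : (u : Fin U) → (h : (u : ℕ) + 1 < U) →
      Fin (Y ⟨(u : ℕ) + 1, h⟩) → Fin (Y u) → ℝ)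
    (hLnn : ∀ u h ybar y, 0 ≤ L u h ybar y)
    (hLrow : ∀ u h ybar, ∑ y, L u h ybar y = 1)
    (hBW : ∀ (u : Fin U) (h : (u : ℕ) + 1 < U) (i : Fin X) (y : Fin (Y u)),
      B u i y = ∑ ybar, B ⟨(u : ℕ) + 1, h⟩ i ybar * L u h ybar y)
    (k : ℕ) (π : Fin X → ℝ) (hπ : π ∈ stdSimplex ℝ (Fin X))
    (u : Fin U) (h : (u : ℕ) + 1 < U) :
    ∑ y, Vit P Y B r ρ k (TF P (B u) π y) * sigF P (B u) π y
      ≤ ∑ y, Vit P Y B r ρ k (TF P (B ⟨(u : ℕ) + 1, h⟩) π y)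
          * sigF P (B ⟨(u : ℕ) + 1, h⟩) π y := by
  set u' : Fin U := ⟨(u : ℕ) + 1, h⟩ with hu'
  calc ∑ y, Vit P Y B r ρ k (TF P (B u) π y) * sigF P (B u) π y
      = ∑ y, Wit P Y B r ρ k (fun j => B u j y * ∑ i, P i j * π i) :=
        Finset.sum_congr rfl fun y _ =>
          Vit_sig_eq_Wit P Y B r ρ hPnn hBnn hσ k π hπ u y
    _ ≤ ∑ y, ∑ ybar, L u h ybar y *
          Wit P Y B r ρ k (fun j => B u' j ybar * ∑ i, P i j * π i) := by
        apply Finset.sum_le_sum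
        intro y _
        have hq : (fun j => B u j y * ∑ i, P i j * π i)
            = fun j => ∑ ybar, L u h ybar y *
                (fun j' => B u' j' ybar * ∑ i, P i j' * π i) j := by
          funext j
          rw [hBW u h j y, Finset.sum_mul]
          exact Finset.sum_congr rfl fun ybar _ => by ring
        rw [hq]
        exact Wit_comb P Y B r ρ hρ k Finset.univ (fun ybar => L u h ybar y)
          (fun ybar => hLnn u h ybar y) _
    _ = ∑ ybar, (∑ y, L u h ybar y) *
          Wit P Y B r ρ k (fun j => B u' j ybar * ∑ i, P i j * π i) := by
        rw [Finset.sum_comm]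
        exact Finset.sum_congr rfl fun ybar _ => (Finset.sum_mul _ _ _).symm
    _ = ∑ ybar, Wit P Y B r ρ k (fun j => B u' j ybar * ∑ i, P i j * π i) := by
        apply Finset.sum_congr rfl
        intro ybar _
        rw [hLrow u h ybar, one_mul]
    _ = _ :=
        Finset.sum_congr rfl fun ybar _ =>
          (Vit_sig_eq_Wit P Y B r ρ hPnn hBnn hσ k π hπ u' ybar).symm

lemma fin_mono (g : Fin U → ℝ)
    (hstep : ∀ (u : Fin U) (h : (u : ℕ) + 1 < U), g u ≤ g ⟨(u : ℕ) + 1, h⟩) :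
    ∀ a b : Fin U, a ≤ b → g a ≤ g b := by
  suffices H : ∀ (n : ℕ) (hn : n < U) (a : Fin U), (a : ℕ) ≤ n → g a ≤ g ⟨n, hn⟩ by
    intro a b hab
    have := H b.1 b.2 a (Fin.le_def.mp hab)
    simpa using this
  intro n
  induction n with
  | zero =>
    intro hn a ha
    have : a = ⟨0, hn⟩ := Fin.ext (Nat.le_zero.mp ha)
    rw [this]
  | succ n ihn =>
    intro hn a ha
    have hn' : n < U := Nat.lt_of_succ_lt hn
    rcases Nat.lt_or_ge (a : ℕ) (n + 1) with h1 | h1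
    · exact le_trans (ihn hn' a (Nat.lt_succ_iff.mp h1)) (hstep ⟨n, hn'⟩ hn)
    · have : a = ⟨n + 1, hn⟩ := Fin.ext (le_antisymm ha h1)
      rw [this]

end AuxLemmas
/-- **Blackwell dominance gives the myopic lower bound for controlled sensing
POMDPs.**  If `B(u) = B(u+1) L^{(u)}` for stochastic matrices `L^{(u)}`
(`u = 1,…,U-1`), then for every value-iteration step `k ≥ 1`, belief `π`
and `u < U`, `Q_k(π,u+1) - Q_k(π,u) ≥ (r_{u+1} - r_u)'π`; hence the largest
maximizer of `Q_k(π,·)` is at least the largest maximizer of `u ↦ r_u'π`. -/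
theorem stmt_18 (X U : ℕ) [NeZero U]
    (P : Fin X → Fin X → ℝ) (hPnn : ∀ i j, 0 ≤ P i j) (hProw : ∀ i, ∑ j, P i j = 1)
    (Y : Fin U → ℕ)
    (B : (u : Fin U) → Fin X → Fin (Y u) → ℝ)
    (hBnn : ∀ u x y, 0 ≤ B u x y) (hBrow : ∀ u x, ∑ y, B u x y = 1)
    (r : Fin U → Fin X → ℝ) (ρ : ℝ) (hρ0 : 0 ≤ ρ) (hρ1 : ρ < 1)
    -- Blackwell dominance: B(u) = B(u+1) × L⁽ᵘ⁾ for stochastic matrices L⁽ᵘ⁾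
    (L : (u : Fin U) → (h : (u : ℕ) + 1 < U) →
      Fin (Y ⟨(u : ℕ) + 1, h⟩) → Fin (Y u) → ℝ)
    (hLnn : ∀ u h ybar y, 0 ≤ L u h ybar y)
    (hLrow : ∀ u h ybar, ∑ y, L u h ybar y = 1)
    (hBW : ∀ (u : Fin U) (h : (u : ℕ) + 1 < U) (i : Fin X) (y : Fin (Y u)),
      B u i y = ∑ ybar, B ⟨(u : ℕ) + 1, h⟩ i ybar * L u h ybar y)
    -- normalizers positive on the belief simplex
    (hσ : ∀ (u : Fin U) (π : Fin X → ℝ), π ∈ stdSimplex ℝ (Fin X) →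
      ∀ y : Fin (Y u), 0 < sigF P (B u) π y) :
    ∀ (k : ℕ), 1 ≤ k → ∀ π : Fin X → ℝ, π ∈ stdSimplex ℝ (Fin X) →
      (∀ (u : Fin U) (h : (u : ℕ) + 1 < U),
        (∑ i, (r ⟨(u : ℕ) + 1, h⟩ i - r u i) * π i) ≤
          Qit P Y B r ρ k ⟨(u : ℕ) + 1, h⟩ π - Qit P Y B r ρ k u π) ∧
      (∀ muLow muOpt : Fin U,
        IsGreatest {u : Fin U | ∀ v, ∑ i, r v i * π i ≤ ∑ i, r u i * π i} muLow →
        IsGreatest {u : Fin U | ∀ v, Qit P Y B r ρ k v π ≤ Qit P Y B r ρ k u π} muOpt →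
        muLow ≤ muOpt) := by
  intro k hk π hπ
  obtain ⟨m, rfl⟩ : ∃ m, k = m + 1 := ⟨k - 1, (Nat.succ_pred_eq_of_pos hk).symm⟩
  have hdiff : ∀ (u : Fin U) (h : (u : ℕ) + 1 < U),
      (∑ i, (r ⟨(u : ℕ) + 1, h⟩ i - r u i) * π i) ≤
        Qit P Y B r ρ (m + 1) ⟨(u : ℕ) + 1, h⟩ π - Qit P Y B r ρ (m + 1) u π := by
    intro u h
    have hkey := key_ineq P Y B r ρ hPnn hBnn hρ0 hσ L hLnn hLrow hBW m π hπ u h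
    have hr : ∑ i, (r ⟨(u : ℕ) + 1, h⟩ i - r u i) * π i
        = (∑ i, r ⟨(u : ℕ) + 1, h⟩ i * π i) - ∑ i, r u i * π i := by
      rw [← Finset.sum_sub_distrib]
      exact Finset.sum_congr rfl fun i _ => by ring
    have hmul := mul_le_mul_of_nonneg_left hkey hρ0
    unfold Qit
    simp only [Nat.add_sub_cancel]
    rw [hr]
    linarith
  refine ⟨hdiff, ?_⟩
  intro muLow muOpt hLow hOpt
  rcases le_or_gt muLow muOpt with hle | hlt
  · exact hle
  · have hmono := fin_mono
      (fun v => Qit P Y B r ρ (m + 1) v π - ∑ i, r v i * π i)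
      (fun u h => by
        have hd := hdiff u h
        have hr : ∑ i, (r ⟨(u : ℕ) + 1, h⟩ i - r u i) * π i
            = (∑ i, r ⟨(u : ℕ) + 1, h⟩ i * π i) - ∑ i, r u i * π i := by
          rw [← Finset.sum_sub_distrib]
          exact Finset.sum_congr rfl fun i _ => by ring
        rw [hr] at hd
        linarith)
      muOpt muLow hlt.le
    have h1 : ∑ i, r muOpt i * π i ≤ ∑ i, r muLow i * π i := hLow.1 muOpt
    have h2 : Qit P Y B r ρ (m + 1) muOpt π ≤ Qit P Y B r ρ (m + 1) muLow π := by
      linarith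
    have hmem : muLow ∈ {u : Fin U | ∀ v,
        Qit P Y B r ρ (m + 1) v π ≤ Qit P Y B r ρ (m + 1) u π} := by
      intro v
      exact le_trans (hOpt.1 v) h2
    exact hOpt.2 hmem
end
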